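/- Let X be a rugged real Banach space, A : X → X* bounded linear monotone with ‖A‖ = 1, and f* ∈ X* with ‖f*‖ = 1, satisfying the whs condition (for all λ > 0, ε > 0: if (Ax + λJx) ∩ B̄(f*, ε) ≠ ∅ then ⟨x, f*⟩ ≤ 3ε). Then for every λ > 0 and every α ∈ ℝ \ {0}, setting R = closure of ran(A + λJ): R is not convex, the closed convex hull of R equals X*, and d(αf*, R) ≥ |α|·m(λ) > 0, where m(λ) = (3λ² + 9λ + 4 − (λ+1)√(9λ² + 36λ + 16))/(4λ + 2). -/

import Mathlib

open NormedSpace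

/-- The duality mapping of a real normed space: `x* ∈ J x` iff `⟨x, x*⟩ = ‖x‖² = ‖x*‖²`. -/
def dualityMap {X : Type*} [NormedAddCommGroup X] [NormedSpace ℝ X] (x : X) :
    Set (StrongDual ℝ X) :=
  {f | f x = ‖x‖ ^ 2 ∧ ‖x‖ ^ 2 = ‖f‖ ^ 2}

lemma dualityMap_smul {X : Type*} [NormedAddCommGroup X] [NormedSpace ℝ X]
    (c : ℝ) {x : X} {u : StrongDual ℝ X} (hu : u ∈ dualityMap x) :
    c • u ∈ dualityMap (c • x) := by
  obtain ⟨h1, h2⟩ := hu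
  constructor
  · rw [ContinuousLinearMap.smul_apply, map_smul, smul_eq_mul, smul_eq_mul,
      norm_smul, mul_pow, Real.norm_eq_abs, sq_abs, h1]
    ring
  · rw [norm_smul, norm_smul, mul_pow, mul_pow, Real.norm_eq_abs, sq_abs]
    rw [h2]

lemma dualityMap_zero {X : Type*} [NormedAddCommGroup X] [NormedSpace ℝ X] :
    (0 : StrongDual ℝ X) ∈ dualityMap (0 : X) := by
  simp [dualityMap]

/-- positivity of the constant m(lam) -/
lemma mval_pos (lam : ℝ) (hlam : 0 < lam) :
    0 < (3 * lam ^ 2 + 9 * lam + 4 - (lam + 1) * Real.sqrt (9 * lam ^ 2 + 36 * lam + 16)) /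
        (4 * lam + 2) := by
  have hs0 : 0 ≤ Real.sqrt (9 * lam ^ 2 + 36 * lam + 16) := Real.sqrt_nonneg _
  have hs2 : Real.sqrt (9 * lam ^ 2 + 36 * lam + 16) ^ 2 = 9 * lam ^ 2 + 36 * lam + 16 :=
    Real.sq_sqrt (by positivity)
  have hnum : (lam + 1) * Real.sqrt (9 * lam ^ 2 + 36 * lam + 16) < 3 * lam ^ 2 + 9 * lam + 4 := by
    nlinarith [sq_nonneg ((lam + 1) * Real.sqrt (9 * lam ^ 2 + 36 * lam + 16) - (3 * lam ^ 2 + 9 * lam + 4))]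
  have hden : 0 < 4 * lam + 2 := by linarith
  exact div_pos (by linarith) hden

/-- m(lam) < 1 -/
lemma mval_lt_one (lam : ℝ) (hlam : 0 < lam) :
    (3 * lam ^ 2 + 9 * lam + 4 - (lam + 1) * Real.sqrt (9 * lam ^ 2 + 36 * lam + 16)) /
        (4 * lam + 2) < 1 := by
  have hs0 : 0 ≤ Real.sqrt (9 * lam ^ 2 + 36 * lam + 16) := Real.sqrt_nonneg _
  have hs2 : Real.sqrt (9 * lam ^ 2 + 36 * lam + 16) ^ 2 = 9 * lam ^ 2 + 36 * lam + 16 :=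
    Real.sq_sqrt (by positivity)
  have hsgt : 3 * lam + 2 < Real.sqrt (9 * lam ^ 2 + 36 * lam + 16) := by
    nlinarith
  rw [div_lt_one (by linarith)]
  nlinarith

lemma arith_quad (lam e t : ℝ) (hlam : 0 < lam) (he : 0 < e) (ht0 : 0 ≤ t)
    (hquad : lam * t ^ 2 ≤ e * t + 3 * e) (htlow : 1 - e ≤ (1 + lam) * t) (he1 : e < 1) :
    (2 * lam + 1) * e ^ 2 - (3 * lam ^ 2 + 9 * lam + 4) * e + lam ≤ 0 := by
  have hupos : 0 < 1 - e := by linarith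
  have hTpos : 0 < (1 + lam) * t := lt_of_lt_of_le hupos htlow
  have hTq : lam * ((1 + lam) * t) ^ 2 ≤ e * (1 + lam) * ((1 + lam) * t) + 3 * e * (1 + lam) ^ 2 := by
    nlinarith [mul_le_mul_of_nonneg_right hquad (sq_nonneg (1 + lam))]
  have h5 : 0 ≤ ((1 + lam) * t - (1 - e)) * (lam * (1 - e) * ((1 + lam) * t) + 3 * e * (1 + lam) ^ 2) := by
    apply mul_nonneg (by linarith)
    have h6 := mul_nonneg (mul_nonneg hlam.le hupos.le) hTpos.le
    nlinarith [sq_nonneg (1 + lam)]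
  nlinarith [hTq, h5, hTpos, hupos, mul_pos hTpos hupos]

lemma arith_final (lam e s : ℝ) (hlam : 0 < lam) (hs0 : 0 ≤ s)
    (hs2 : s ^ 2 = 9 * lam ^ 2 + 36 * lam + 16)
    (hg : (2 * lam + 1) * e ^ 2 - (3 * lam ^ 2 + 9 * lam + 4) * e + lam ≤ 0)
    (hq3 : e * (4 * lam + 2) < 3 * lam ^ 2 + 9 * lam + 4 - (lam + 1) * s) : False := by
  have h1 : 0 < 3 * lam ^ 2 + 9 * lam + 4 - e * (4 * lam + 2) - (lam + 1) * s := by linarith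
  have h2 : 0 < 3 * lam ^ 2 + 9 * lam + 4 - e * (4 * lam + 2) + (lam + 1) * s := by
    nlinarith [mul_nonneg (by linarith : (0:ℝ) ≤ lam + 1) hs0]
  nlinarith [mul_pos h1 h2, hs2, hg, hlam]

/-- Core distance estimate for α = 1. -/
lemma key_est {X : Type*} [NormedAddCommGroup X] [NormedSpace ℝ X]
    (A : X →L[ℝ] StrongDual ℝ X)
    (hmono : ∀ x y : X, 0 ≤ (A x - A y) (x - y)) (hA : ‖A‖ = 1)
    (f : StrongDual ℝ X) (hf : ‖f‖ = 1)
    (hwhs : ∀ lam > (0:ℝ), ∀ ε > (0:ℝ), ∀ x : X,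
      (∃ xs ∈ dualityMap x, ‖A x + lam • xs - f‖ ≤ ε) → f x ≤ 3 * ε)
    (lam : ℝ) (hlam : 0 < lam) (x : X) (xs : StrongDual ℝ X) (hxs : xs ∈ dualityMap x) :
    (3 * lam ^ 2 + 9 * lam + 4 - (lam + 1) * Real.sqrt (9 * lam ^ 2 + 36 * lam + 16)) /
        (4 * lam + 2) ≤ ‖A x + lam • xs - f‖ := by
  by_contra hcon
  push_neg at hcon
  have hmpos := mval_pos lam hlam
  have hm1 := mval_lt_one lam hlam
  have hε0 : 0 ≤ ‖A x + lam • xs - f‖ := norm_nonneg _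
  -- intermediate value e
  obtain ⟨e, hepos, he1, he2⟩ : ∃ e : ℝ, 0 < e ∧ ‖A x + lam • xs - f‖ ≤ e ∧
      e < (3 * lam ^ 2 + 9 * lam + 4 - (lam + 1) * Real.sqrt (9 * lam ^ 2 + 36 * lam + 16)) /
        (4 * lam + 2) :=
    ⟨(‖A x + lam • xs - f‖ + (3 * lam ^ 2 + 9 * lam + 4 -
        (lam + 1) * Real.sqrt (9 * lam ^ 2 + 36 * lam + 16)) / (4 * lam + 2)) / 2,
      by linarith, by linarith, by linarith⟩
  have he1' : e < 1 := lt_trans he2 hm1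
  -- whs
  have hfx : f x ≤ 3 * e := hwhs lam hlam e hepos x ⟨xs, hxs, he1⟩
  -- monotonicity at 0
  have hAx : 0 ≤ A x x := by
    have := hmono x 0
    simpa using this
  have hxsx : xs x = ‖x‖ ^ 2 := hxs.1
  have hnxs : ‖xs‖ = ‖x‖ := by
    have h2 := hxs.2
    nlinarith [norm_nonneg x, norm_nonneg xs]
  have ht0 : 0 ≤ ‖x‖ := norm_nonneg x
  -- pairing upper bound
  have hub : (A x + lam • xs - f) x ≤ e * ‖x‖ := by
    have h1 : (A x + lam • xs - f) x ≤ ‖(A x + lam • xs - f) x‖ := le_abs_self _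
    have h2 : ‖(A x + lam • xs - f) x‖ ≤ ‖A x + lam • xs - f‖ * ‖x‖ :=
      ContinuousLinearMap.le_opNorm _ _
    have h3 : ‖A x + lam • xs - f‖ * ‖x‖ ≤ e * ‖x‖ :=
      mul_le_mul_of_nonneg_right he1 ht0
    linarith
  have hpair : (A x + lam • xs - f) x = A x x + lam * ‖x‖ ^ 2 - f x := by
    simp [ContinuousLinearMap.add_apply, ContinuousLinearMap.sub_apply,
      ContinuousLinearMap.smul_apply, smul_eq_mul, hxsx]
  have hquad : lam * ‖x‖ ^ 2 ≤ e * ‖x‖ + 3 * e := by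
    rw [hpair] at hub
    linarith
  -- lower bound on ‖x‖
  have htlow : 1 - e ≤ (1 + lam) * ‖x‖ := by
    have h1 : ‖f‖ ≤ ‖A x + lam • xs - f‖ + ‖A x + lam • xs‖ := by
      calc ‖f‖ = ‖(A x + lam • xs) - (A x + lam • xs - f)‖ := by rw [sub_sub_cancel]
        _ ≤ ‖A x + lam • xs‖ + ‖A x + lam • xs - f‖ := norm_sub_le _ _
        _ = ‖A x + lam • xs - f‖ + ‖A x + lam • xs‖ := by ring
    have h2 : ‖A x + lam • xs‖ ≤ ‖A x‖ + lam * ‖xs‖ := by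
      have := norm_add_le (A x) (lam • xs)
      rw [norm_smul, Real.norm_eq_abs, abs_of_pos hlam] at this
      linarith
    have h3 : ‖A x‖ ≤ ‖x‖ := by
      have := A.le_opNorm x
      rw [hA, one_mul] at this
      exact this
    rw [hf] at h1
    rw [hnxs] at h2
    nlinarith
  have hg := arith_quad lam e ‖x‖ hlam hepos ht0 hquad htlow he1'
  have hq3 : e * (4 * lam + 2) <
      3 * lam ^ 2 + 9 * lam + 4 - (lam + 1) * Real.sqrt (9 * lam ^ 2 + 36 * lam + 16) := by
    have := (lt_div_iff₀ (by linarith : (0:ℝ) < 4 * lam + 2)).mp he2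
    linarith
  exact arith_final lam e (Real.sqrt (9 * lam ^ 2 + 36 * lam + 16)) hlam (Real.sqrt_nonneg _)
    (Real.sq_sqrt (by positivity)) hg hq3

set_option maxHeartbeats 2000000 in
theorem stmt15 {X : Type*} [NormedAddCommGroup X] [NormedSpace ℝ X] [CompleteSpace X]
    (hrugged : (Submodule.span ℝ {d : StrongDual ℝ X |
        ∃ x u v, u ∈ dualityMap x ∧ v ∈ dualityMap x ∧ d = u - v}).topologicalClosure = ⊤)
    (A : X →L[ℝ] StrongDual ℝ X)
    (hmono : ∀ x y : X, 0 ≤ (A x - A y) (x - y)) (hA : ‖A‖ = 1)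
    (f : StrongDual ℝ X) (hf : ‖f‖ = 1)
    (hwhs : ∀ lam > (0:ℝ), ∀ ε > (0:ℝ), ∀ x : X,
      (∃ xs ∈ dualityMap x, ‖A x + lam • xs - f‖ ≤ ε) → f x ≤ 3 * ε)
    (lam : ℝ) (hlam : 0 < lam) (α : ℝ) (hα : α ≠ 0) :
    let R := closure {g : StrongDual ℝ X | ∃ x xs, xs ∈ dualityMap x ∧ g = A x + lam • xs}
    ¬ Convex ℝ R ∧ closure (convexHull ℝ R) = Set.univ ∧
    Metric.infDist (α • f) R ≥
      |α| * ((3 * lam ^ 2 + 9 * lam + 4 -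
          (lam + 1) * Real.sqrt (9 * lam ^ 2 + 36 * lam + 16)) / (4 * lam + 2)) ∧
    0 < (3 * lam ^ 2 + 9 * lam + 4 - (lam + 1) * Real.sqrt (9 * lam ^ 2 + 36 * lam + 16)) /
        (4 * lam + 2) := by
  intro R
  set S := {g : StrongDual ℝ X | ∃ x xs, xs ∈ dualityMap x ∧ g = A x + lam • xs} with hS
  set m := (3 * lam ^ 2 + 9 * lam + 4 - (lam + 1) * Real.sqrt (9 * lam ^ 2 + 36 * lam + 16)) /
        (4 * lam + 2) with hm
  have hmpos : 0 < m := mval_pos lam hlam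
  have hSne : S.Nonempty := ⟨0, 0, 0, dualityMap_zero, by simp⟩
  -- distance estimate
  have hdist : Metric.infDist (α • f) R ≥ |α| * m := by
    rw [show R = closure S from rfl, Metric.infDist_closure]
    by_contra hlt
    push_neg at hlt
    obtain ⟨g, hgS, hgd⟩ := (Metric.infDist_lt_iff hSne).mp hlt
    obtain ⟨x, xs, hxs, rfl⟩ := hgS
    -- rescale by α⁻¹
    have hxs' : α⁻¹ • xs ∈ dualityMap (α⁻¹ • x) := dualityMap_smul _ hxs
    have hkey := key_est A hmono hA f hf hwhs lam hlam (α⁻¹ • x) (α⁻¹ • xs) hxs'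
    have heq : A (α⁻¹ • x) + lam • (α⁻¹ • xs) - f = α⁻¹ • (A x + lam • xs - α • f) := by
      rw [map_smul]
      rw [smul_sub, smul_add, smul_smul, smul_smul, smul_smul, inv_mul_cancel₀ hα,
        one_smul, mul_comm lam α⁻¹, ← smul_smul]
    rw [heq, norm_smul, Real.norm_eq_abs, abs_inv] at hkey
    have hdd : dist (α • f) (A x + lam • xs) = ‖A x + lam • xs - α • f‖ := by
      rw [dist_eq_norm, norm_sub_rev]
    rw [hdd] at hgd
    have habs : 0 < |α| := abs_pos.mpr hα
    rw [← hm] at hkey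
    have h6 : |α| * m ≤ ‖A x + lam • xs - α • f‖ := by
      have h7 := mul_le_mul_of_nonneg_left hkey habs.le
      rwa [← mul_assoc, mul_inv_cancel₀ habs.ne', one_mul] at h7
    linarith
  -- closed convex hull is everything
  have hull_univ : closure (convexHull ℝ S) = Set.univ := by
    set D := {d : StrongDual ℝ X | ∃ x u v, u ∈ dualityMap x ∧ v ∈ dualityMap x ∧ d = u - v} with hD
    have hray : ∀ d ∈ D, ∀ t : ℝ, 0 ≤ t → t • d ∈ convexHull ℝ S := by
      rintro d ⟨x, u, v, hu, hv, rfl⟩ t ht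
      obtain ⟨c, hc0, hct⟩ : ∃ c : ℝ, 0 ≤ c ∧ t = (1/2) * (lam * c) :=
        ⟨2 * t / lam, by positivity, by field_simp⟩
      have hg1 : A (c • x) + lam • (c • u) ∈ S := ⟨c • x, c • u, dualityMap_smul c hu, rfl⟩
      have hg2 : A ((-c) • x) + lam • ((-c) • v) ∈ S :=
        ⟨(-c) • x, (-c) • v, dualityMap_smul (-c) hv, rfl⟩
      have hmid := (convex_convexHull ℝ S) (subset_convexHull ℝ S hg1) (subset_convexHull ℝ S hg2)
        (by norm_num : (0:ℝ) ≤ 1/2) (by norm_num : (0:ℝ) ≤ 1/2) (by norm_num)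
      have heq2 : (1/2 : ℝ) • (A (c • x) + lam • (c • u)) +
          (1/2 : ℝ) • (A ((-c) • x) + lam • ((-c) • v)) = t • (u - v) := by
        rw [map_smul, map_smul, hct]
        module
      rw [heq2] at hmid
      exact hmid
    have hDneg : ∀ d ∈ D, -d ∈ D := by
      rintro d ⟨x, u, v, hu, hv, rfl⟩
      exact ⟨x, v, u, hv, hu, by abel⟩
    have hspan : ∀ z ∈ Submodule.span ℝ D, ∀ t : ℝ, t • z ∈ convexHull ℝ S := by
      intro z hz
      induction hz using Submodule.span_induction with
      | mem d hd =>
        intro t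
        rcases le_or_gt 0 t with ht | ht
        · exact hray d hd t ht
        · have : t • d = (-t) • (-d) := by simp
          rw [this]
          exact hray (-d) (hDneg d hd) (-t) (by linarith)
      | zero =>
        intro t
        rw [smul_zero]
        exact subset_convexHull ℝ S ⟨0, 0, dualityMap_zero, by simp⟩
      | add z w hz hw ihz ihw =>
        intro t
        have h1 := ihz (2 * t)
        have h2 := ihw (2 * t)
        have := (convex_convexHull ℝ S) h1 h2
          (by norm_num : (0:ℝ) ≤ 1/2) (by norm_num : (0:ℝ) ≤ 1/2) (by norm_num)
        have heq3 : (1/2 : ℝ) • ((2*t) • z) + (1/2 : ℝ) • ((2*t) • w) = t • (z + w) := by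
          module
        rwa [heq3] at this
      | smul a z hz ihz =>
        intro t
        rw [smul_smul]
        exact ihz (t * a)
    have hsub : (Submodule.span ℝ D : Set (StrongDual ℝ X)) ⊆ convexHull ℝ S := by
      intro z hz
      have := hspan z hz 1
      rwa [one_smul] at this
    have h1 : closure (Submodule.span ℝ D : Set (StrongDual ℝ X)) ⊆ closure (convexHull ℝ S) :=
      closure_mono hsub
    have h2 : closure (Submodule.span ℝ D : Set (StrongDual ℝ X)) = Set.univ := by
      rw [← Submodule.topologicalClosure_coe, hrugged]
      simp
    rw [h2] at h1
    exact Set.eq_univ_of_univ_subset h1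
  have hhull : closure (convexHull ℝ R) = Set.univ := by
    apply Set.eq_univ_of_univ_subset
    rw [← hull_univ]
    exact closure_mono (convexHull_mono subset_closure)
  refine ⟨?_, hhull, hdist, hmpos⟩
  -- non-convexity
  intro hconv
  have hclosed : IsClosed R := isClosed_closure
  have hRuniv : R = Set.univ := by
    rw [← hhull, hconv.convexHull_eq, hclosed.closure_eq]
  have hmem : α • f ∈ R := by rw [hRuniv]; trivial
  have : Metric.infDist (α • f) R = 0 := Metric.infDist_zero_of_mem hmem
  rw [this] at hdist
  have : 0 < |α| * m := mul_pos (abs_pos.mpr hα) hmpos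
  linarith
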